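/- Let p be a prime and let Γ = p^ℤ act on the product A × ℚ^{>0}, where A = ẑ_{(p)}^× / q^{ẑ} for a fixed prime power q = p^d (the quotient of the prime-to-p profinite units by the closure of the subgroup generated by q), with p^n acting by (a, r) ↦ (p^{−n} a, p^n r). Let ℚ^{>0} act on the quotient S = A ×_Γ ℚ^{>0} via the second factor. Then the stabilizer in ℚ^{>0} of every point [a, r] ∈ S equals q^ℤ. -/

import Mathlib

/-- For each prime `l ≠ p`, `l` is prime. -/
instance factPrimeOfNe (p : ℕ) (l : {l : ℕ // Nat.Prime l ∧ l ≠ p}) :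
    Fact (Nat.Prime l.1) := ⟨l.2.1⟩

/-- The prime-to-`p` profinite completion `ẑ_{(p)} = ∏_{l ≠ p} ℤ_l`. -/
abbrev ZhatAwayFrom (p : ℕ) : Type :=
  Π l : {l : ℕ // Nat.Prime l ∧ l ≠ p}, ℤ_[l.1]

/-- Cyclotomic case of the order lemma: there is a prime `l ≠ p` such that `p` has
multiplicative order exactly `p ^ e` modulo `l`. -/
lemma stmt19.ntLemmaP (p e : ℕ) (hp : p.Prime) (he : 1 ≤ e) :
    ∃ l : ℕ, l.Prime ∧ l ≠ p ∧ p ^ e = orderOf ((p : ZMod l)) := by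
  haveI : Fact p.Prime := ⟨hp⟩
  set c : ℤ := Polynomial.eval (p : ℤ) (Polynomial.cyclotomic (p ^ e) ℤ) with hc
  have hpe1 : 1 < p ^ e := Nat.one_lt_pow (by omega) hp.one_lt
  have hgt : 1 < c.natAbs := by
    have h1 := Polynomial.sub_one_lt_natAbs_cyclotomic_eval (q := p) hpe1 hp.one_lt.ne'
    have h2 := hp.two_le
    omega
  set l := Nat.minFac c.natAbs with hl
  have hlprime : l.Prime := Nat.minFac_prime hgt.ne'
  haveI : Fact l.Prime := ⟨hlprime⟩
  have hldvd : (l : ℤ) ∣ c :=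
    Int.dvd_natAbs.mp (Int.natCast_dvd_natCast.mpr (Nat.minFac_dvd _))
  have key : ∀ m : ℕ, ((c : ℤ) : ZMod m) =
      Polynomial.eval ((p : ℕ) : ZMod m) (Polynomial.cyclotomic (p ^ e) (ZMod m)) := by
    intro m
    rw [hc, show ((Polynomial.eval (p : ℤ) (Polynomial.cyclotomic (p ^ e) ℤ) : ℤ) : ZMod m)
        = (Int.castRingHom (ZMod m)) (Polynomial.eval (p : ℤ) (Polynomial.cyclotomic (p ^ e) ℤ))
        from rfl, ← Polynomial.eval_natCast_map, Polynomial.map_cyclotomic_int]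
  have hlp : l ≠ p := by
    intro h
    have hdvd : (p : ℤ) ∣ c := h ▸ hldvd
    have : ((c : ℤ) : ZMod p) = 0 := by
      exact_mod_cast (ZMod.intCast_zmod_eq_zero_iff_dvd c p).mpr hdvd
    rw [key p, ZMod.natCast_self, ← Polynomial.coeff_zero_eq_eval_zero,
      Polynomial.cyclotomic_coeff_zero _ hpe1] at this
    exact one_ne_zero this
  have hroot : Polynomial.IsRoot (Polynomial.cyclotomic (p ^ e) (ZMod l)) (p : ZMod l) := by
    have : ((c : ℤ) : ZMod l) = 0 := (ZMod.intCast_zmod_eq_zero_iff_dvd c l).mpr hldvd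
    rw [key l] at this
    exact this
  haveI : NeZero ((p ^ e : ℕ) : ZMod l) := by
    refine NeZero.of_not_dvd (ZMod l) (p := l) fun hdvd => ?_
    exact hlp ((Nat.prime_dvd_prime_iff_eq hlprime hp).mp (hlprime.dvd_of_dvd_pow hdvd))
  have hprim := (Polynomial.isRoot_cyclotomic_iff (R := ZMod l) (n := p ^ e)).mp hroot
  exact ⟨l, hlprime, hlp, hprim.eq_orderOf⟩

/-- Pumping case of the order lemma: for a prime `s ≠ p`, the multiplicative order of `p`
modulo a suitable power of `s` is divisible by `s ^ e`. -/
lemma stmt19.ntLemmaS (p s e : ℕ) (hp : p.Prime) (hs : s.Prime) (hsp : s ≠ p) (he : 1 ≤ e) :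
    ∃ k : ℕ, s ^ e ∣ orderOf ((p : ZMod (s ^ k))) := by
  set E : ℕ := s ^ (e - 1) * (s - 1) with hE
  have hE1 : 1 ≤ E := Nat.mul_pos (pow_pos hs.pos _) (by have := hs.two_le; omega)
  set N : ℕ := p ^ E - 1 with hN
  have hN0 : N ≠ 0 := by
    have : 2 ≤ p ^ E := le_trans hp.two_le (Nat.le_self_pow (by omega) p)
    omega
  refine ⟨N.factorization s + 1, ?_⟩
  set k : ℕ := N.factorization s + 1 with hk
  haveI : NeZero (s ^ k) := ⟨pow_ne_zero _ hs.pos.ne'⟩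
  set t : ℕ := orderOf ((p : ZMod (s ^ k))) with ht
  have hcop : Nat.Coprime p (s ^ k) :=
    (Nat.coprime_primes hp hs).mpr (Ne.symm hsp) |>.pow_right _
  have heuler : ((p : ZMod (s ^ k))) ^ Nat.totient (s ^ k) = 1 := by
    have := Nat.ModEq.pow_totient hcop
    have h2 := (ZMod.natCast_eq_natCast_iff _ _ _).mpr this
    push_cast at h2
    exact h2
  have htdvd : t ∣ Nat.totient (s ^ k) := orderOf_dvd_of_pow_eq_one heuler
  have htot : Nat.totient (s ^ k) = s ^ (k - 1) * (s - 1) :=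
    Nat.totient_prime_pow hs (by omega)
  have ht0 : t ≠ 0 := by
    intro h
    rw [h] at htdvd
    have := Nat.totient_pos.mpr (pow_pos hs.pos k)
    omega
  by_contra hcon
  have hfe : t.factorization s ≤ e - 1 := by
    have := (Nat.Prime.pow_dvd_iff_le_factorization hs ht0).not.mp hcon
    omega
  have hproj : s ^ t.factorization s ∣ s ^ (e - 1) := pow_dvd_pow _ hfe
  have hcompl : (t / s ^ t.factorization s) ∣ s - 1 := by
    have h1 : (t / s ^ t.factorization s) ∣ s ^ (k - 1) * (s - 1) :=
      dvd_trans (Nat.ordCompl_dvd t s) (htot ▸ htdvd)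
    have hcop2 : Nat.Coprime (t / s ^ t.factorization s) (s ^ (k - 1)) :=
      ((Nat.coprime_ordCompl hs ht0).symm).pow_right _
    exact hcop2.dvd_of_dvd_mul_left h1
  have htE : t ∣ E := by
    have := Nat.mul_dvd_mul hproj hcompl
    rwa [Nat.ordProj_mul_ordCompl_eq_self t s] at this
  have hpt : s ^ k ∣ p ^ t - 1 := by
    have h1 : ((p : ZMod (s ^ k))) ^ t = 1 := pow_orderOf_eq_one _
    have h2 : ((p ^ t : ℕ) : ZMod (s ^ k)) = ((1 : ℕ) : ZMod (s ^ k)) := by push_cast; simpa using h1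
    have h3 := (ZMod.natCast_eq_natCast_iff _ _ _).mp h2
    exact (Nat.modEq_iff_dvd' (Nat.one_le_pow _ _ hp.pos)).mp h3.symm
  have hdvdN : s ^ k ∣ N := by
    obtain ⟨u, hu⟩ := htE
    have : p ^ t - 1 ∣ p ^ E - 1 := by
      have := Nat.sub_dvd_pow_sub_pow (p ^ t) 1 u
      rwa [one_pow, ← pow_mul, ← hu] at this
    exact hpt.trans this
  have := (Nat.Prime.pow_dvd_iff_le_factorization hs hN0).mp hdvdN
  omega

/-- Combined order lemma: for every prime power `s ^ e`, there are a prime `l ≠ p` and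
`k : ℕ` such that `s ^ e` divides the order of `p` modulo `l ^ k`. -/
lemma stmt19.ntLemma (p s e : ℕ) (hp : p.Prime) (hs : s.Prime) (he : 1 ≤ e) :
    ∃ l k : ℕ, l.Prime ∧ l ≠ p ∧ s ^ e ∣ orderOf ((p : ZMod (l ^ k))) := by
  rcases eq_or_ne s p with rfl | hsp
  · obtain ⟨l, hl, hlp, horder⟩ := stmt19.ntLemmaP s e hp he
    refine ⟨l, 1, hl, hlp, ?_⟩
    rw [pow_one l, ← horder]
  · obtain ⟨k, hk⟩ := stmt19.ntLemmaS p s e hp hs hsp he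
    exact ⟨s, k, hs, hsp, hk⟩

/-- Fibers of `PadicInt.toZModPow` are closed. -/
lemma stmt19.fiberClosed (l : ℕ) [hl : Fact l.Prime] (k : ℕ) (c : ZMod (l ^ k)) :
    IsClosed {z : ℤ_[l] | PadicInt.toZModPow k z = c} := by
  rcases Nat.eq_zero_or_pos k with rfl | hk
  · haveI : Subsingleton (ZMod (l ^ 0)) := by rw [pow_zero]; infer_instance
    have : {z : ℤ_[l] | PadicInt.toZModPow 0 z = c} = Set.univ := by
      ext z; simp only [Set.mem_setOf_eq, Set.mem_univ, iff_true]; exact Subsingleton.elim _ _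
    rw [this]; exact isClosed_univ
  · haveI : NeZero (l ^ k) := ⟨pow_ne_zero _ hl.out.pos.ne'⟩
    obtain ⟨a, ha⟩ := ZMod.natCast_rightInverse.surjective c
    have hset : {z : ℤ_[l] | PadicInt.toZModPow k z = c} =
        {z : ℤ_[l] | ‖z - (a : ℤ_[l])‖ ≤ (l : ℝ) ^ (-(k : ℤ))} := by
      ext z
      have : PadicInt.toZModPow k ((a : ℕ) : ℤ_[l]) = c := by
        rw [map_natCast]; exact ha
      simp only [Set.mem_setOf_eq, ← this, PadicInt.norm_le_pow_iff_mem_span_pow,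
        ← PadicInt.ker_toZModPow, RingHom.mem_ker, map_sub, sub_eq_zero]
    rw [hset]
    exact IsClosed.preimage (continuous_norm.comp (continuous_id.sub continuous_const))
      isClosed_Iic

/-- Detection lemma: if `pu ^ n` lies in the closure of the subgroup generated by
`pu ^ d`, then `n ≡ d m` modulo the order of `p` in any `(ZMod (l ^ k))ˣ`, `l ≠ p`. -/
lemma stmt19.detect (p : ℕ) (d : ℕ) (pu : (ZhatAwayFrom p)ˣ)
    (hpu : (pu : ZhatAwayFrom p) = (p : ZhatAwayFrom p))
    (n : ℤ) (hmem : pu ^ n ∈ (Subgroup.zpowers (pu ^ (d : ℤ))).topologicalClosure)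
    (l k : ℕ) (hl : l.Prime) (hlp : l ≠ p) :
    ∃ m : ℤ, (orderOf ((p : ZMod (l ^ k))) : ℤ) ∣ n - d * m := by
  haveI : Fact l.Prime := ⟨hl⟩
  set L : {l : ℕ // Nat.Prime l ∧ l ≠ p} := ⟨l, hl, hlp⟩ with hL
  set g : ZhatAwayFrom p →+* ZMod (l ^ k) :=
    (PadicInt.toZModPow k).comp (Pi.evalRingHom _ L) with hg
  set F : (ZhatAwayFrom p)ˣ →* (ZMod (l ^ k))ˣ := Units.map g.toMonoidHom with hF
  set X : Subgroup (ZhatAwayFrom p)ˣ := (Subgroup.zpowers (F (pu ^ (d : ℤ)))).comap F with hX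
  have hXclosed : IsClosed (X : Set (ZhatAwayFrom p)ˣ) := by
    have : (X : Set (ZhatAwayFrom p)ˣ) =
        ⋃ c ∈ (Subgroup.zpowers (F (pu ^ (d : ℤ))) : Set (ZMod (l ^ k))ˣ),
          {x : (ZhatAwayFrom p)ˣ | g (x : ZhatAwayFrom p) = (c : ZMod (l ^ k))} := by
      ext x
      simp only [Set.mem_iUnion, Set.mem_setOf_eq, SetLike.mem_coe, Subgroup.mem_comap, hX]
      constructor
      · intro hx
        exact ⟨F x, hx, rfl⟩
      · rintro ⟨c, hc, hcx⟩
        have : F x = c := Units.ext hcx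
        rwa [this]
    rw [this]
    refine Set.Finite.isClosed_biUnion (Set.toFinite _) fun c _ => ?_
    have : {x : (ZhatAwayFrom p)ˣ | g (x : ZhatAwayFrom p) = (c : ZMod (l ^ k))} =
        (fun x : (ZhatAwayFrom p)ˣ => ((x : ZhatAwayFrom p) L)) ⁻¹'
          {z : ℤ_[l] | PadicInt.toZModPow k z = (c : ZMod (l ^ k))} := rfl
    rw [this]
    exact IsClosed.preimage ((continuous_apply L).comp Units.continuous_val)
      (stmt19.fiberClosed l k _)
  have hle : Subgroup.zpowers (pu ^ (d : ℤ)) ≤ X := by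
    rw [hX]
    intro x hx
    obtain ⟨m, hm⟩ := Subgroup.mem_zpowers_iff.mp hx
    exact Subgroup.mem_comap.mpr
      (Subgroup.mem_zpowers_iff.mpr ⟨m, by rw [← hm]; simp [map_zpow]⟩)
  have hXmem : pu ^ n ∈ X :=
    (Subgroup.topologicalClosure_minimal _ hle hXclosed) hmem
  obtain ⟨m, hm⟩ := Subgroup.mem_zpowers_iff.mp (Subgroup.mem_comap.mp hXmem)
  refine ⟨m, ?_⟩
  have hFpu : ((F pu : (ZMod (l ^ k))ˣ) : ZMod (l ^ k)) = (p : ZMod (l ^ k)) := by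
    rw [hF]
    show g (pu : ZhatAwayFrom p) = _
    rw [hpu, map_natCast]
  have horder : orderOf ((p : ZMod (l ^ k))) = orderOf (F pu) := by
    rw [← hFpu, orderOf_units]
  rw [horder, orderOf_dvd_iff_zpow_eq_one]
  have : (F pu) ^ ((d : ℤ) * m) = F pu ^ n := by
    rw [map_zpow, map_zpow] at hm
    rw [zpow_mul, hm]
  rw [zpow_sub, this, mul_inv_cancel]

/-- Let `q = p^d` be a prime power, `A = ẑ_{(p)}ˣ / q^ẑ` the quotient of the
prime-to-`p` profinite units by the closed subgroup topologically generated by `q`,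
and let `Γ = p^ℤ` act on `A × ℚ^{>0}` by `p^n (a, r) = (p^{-n} a, p^n r)`. Then the
stabilizer in `ℚ^{>0}` of every point `[a, r]` of `A ×_Γ ℚ^{>0}` is exactly `q^ℤ`:
`q'` fixes `[a, r]` (i.e. `∃ n, p^n • a = a` in `A` and `r q' = p^n r`) iff
`q' = q^m` for some `m ∈ ℤ`. -/
theorem stmt19 (p d : ℕ) (hp : p.Prime) (hd : 1 ≤ d)
    (pu qu : (ZhatAwayFrom p)ˣ)
    (hpu : (pu : ZhatAwayFrom p) = (p : ZhatAwayFrom p))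
    (hqu : (qu : ZhatAwayFrom p) = (p : ZhatAwayFrom p) ^ d)
    (a : (ZhatAwayFrom p)ˣ ⧸ (Subgroup.zpowers qu).topologicalClosure)
    (r q' : ℚ) (hr : 0 < r) (hq' : 0 < q') :
    (∃ n : ℤ,
        (QuotientGroup.mk pu :
            (ZhatAwayFrom p)ˣ ⧸ (Subgroup.zpowers qu).topologicalClosure) ^ n * a = a ∧
        r * q' = (p : ℚ) ^ n * r) ↔
    ∃ m : ℤ, q' = ((p : ℚ) ^ d) ^ m := by
  have hqupu : qu = pu ^ d := by
    ext1
    rw [Units.val_pow_eq_pow_val, hpu, hqu]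
  constructor
  · rintro ⟨n, ha, hrq⟩
    have hq'n : q' = (p : ℚ) ^ n := by
      have : q' * r = (p : ℚ) ^ n * r := by rw [mul_comm] at hrq; exact hrq
      exact mul_right_cancel₀ hr.ne' this
    obtain ⟨b, rfl⟩ := QuotientGroup.mk_surjective a
    have hmem : pu ^ n ∈ (Subgroup.zpowers qu).topologicalClosure := by
      rw [← QuotientGroup.mk_zpow, ← QuotientGroup.mk_mul] at ha
      have h2 := QuotientGroup.eq.mp ha
      have h3 : (pu ^ n * b)⁻¹ * b = (pu ^ n)⁻¹ := by
        rw [mul_inv_rev, mul_comm b⁻¹, mul_assoc, inv_mul_cancel, mul_one]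
      rw [h3] at h2
      exact (Subgroup.inv_mem_iff _).mp h2
    rw [hqupu, ← zpow_natCast pu d] at hmem
    have hdvd : (d : ℤ) ∣ n := by
      rw [Int.natCast_dvd]
      rw [Nat.dvd_iff_prime_pow_dvd_dvd]
      intro s e hsP hsed
      rcases Nat.eq_zero_or_pos e with rfl | he
      · simpa using one_dvd _
      have hs : s.Prime := hsP
      obtain ⟨l, k, hl, hlp, hord⟩ := stmt19.ntLemma p s e hp hs he
      obtain ⟨m, hm⟩ := stmt19.detect p d pu hpu n hmem l k hl hlp
      have h1 : ((s ^ e : ℕ) : ℤ) ∣ n - d * m :=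
        dvd_trans (Int.natCast_dvd_natCast.mpr hord) hm
      have h2 : ((s ^ e : ℕ) : ℤ) ∣ (d : ℤ) * m :=
        Dvd.dvd.mul_right (Int.natCast_dvd_natCast.mpr hsed) m
      have h3 : ((s ^ e : ℕ) : ℤ) ∣ n := by
        have := dvd_add h1 h2
        rwa [sub_add_cancel] at this
      rwa [Int.natCast_dvd] at h3
    obtain ⟨m, rfl⟩ := hdvd
    refine ⟨m, ?_⟩
    rw [hq'n, zpow_mul, zpow_natCast]
  · rintro ⟨m, rfl⟩
    refine ⟨(d : ℤ) * m, ?_, ?_⟩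
    · have : pu ^ ((d : ℤ) * m) ∈ (Subgroup.zpowers qu).topologicalClosure := by
        apply Subgroup.le_topologicalClosure
        rw [hqupu]
        exact Subgroup.mem_zpowers_iff.mpr ⟨m, by rw [← zpow_natCast pu d, ← zpow_mul]⟩
      have h1 : (QuotientGroup.mk pu :
          (ZhatAwayFrom p)ˣ ⧸ (Subgroup.zpowers qu).topologicalClosure) ^ ((d : ℤ) * m) = 1 := by
        rw [← QuotientGroup.mk_zpow, QuotientGroup.eq_one_iff]
        exact this
      rw [h1]
      exact one_mul a
    · rw [mul_comm, zpow_mul, zpow_natCast]
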